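/- Monotonic decrease of the bound: under the same definitions, δ_k = C(T̲_k) − C(T̄_k) satisfies δ_{k+1} ≤ δ_k for all 1 ≤ k < K, provided S(T̲_k) is nonempty. -/
import Mathlib


/-- Cost of a path `τ` under traversability map `T` with auxiliary cost `f'`. -/
def pathCost {V : Type*} (f' : List V → ℝ) (T : V → ℝ) (τ : List V) : ℝ :=
  (τ.map fun v => (1 - T v) ^ 2).sum + f' τ

/-- Feasible path set: paths in `P` all of whose vertices have traversability at least `θ`. -/
def feasSet {V : Type*} (P : Finset (List V)) (θ : ℝ) (T : V → ℝ) : Set (List V) :=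
  {τ | τ ∈ P ∧ ∀ v ∈ τ, θ ≤ T v}

/-- Optimal path cost over the feasible set. -/
noncomputable def optCost {V : Type*} (P : Finset (List V)) (θ : ℝ)
    (f' : List V → ℝ) (T : V → ℝ) : ℝ :=
  sInf (pathCost f' T '' feasSet P θ T)

lemma feasSet_mono {V : Type*} (P : Finset (List V)) (θ : ℝ) {T T' : V → ℝ}
    (hle : ∀ v, T v ≤ T' v) : feasSet P θ T ⊆ feasSet P θ T' :=
  fun τ h => ⟨h.1, fun v hv => (h.2 v hv).trans (hle v)⟩

lemma optCost_antitone {V : Type*} (P : Finset (List V)) (θ : ℝ) (f' : List V → ℝ)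
    {T T' : V → ℝ} (h1 : ∀ v, T' v ≤ 1) (hle : ∀ v, T v ≤ T' v)
    (hne : (feasSet P θ T).Nonempty) :
    optCost P θ f' T' ≤ optCost P θ f' T := by
  have hsub := feasSet_mono P θ hle
  have hfin : (feasSet P θ T').Finite :=
    Set.Finite.subset P.finite_toSet (fun τ h => h.1)
  have hbdd : BddBelow (pathCost f' T' '' feasSet P θ T') := (hfin.image _).bddBelow
  refine le_csInf (hne.image _) ?_
  rintro b ⟨τ, hτ, rfl⟩
  have hcost : pathCost f' T' τ ≤ pathCost f' T τ := by
    unfold pathCost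
    have : (τ.map fun v => (1 - T' v) ^ 2).sum ≤ (τ.map fun v => (1 - T v) ^ 2).sum := by
      apply List.sum_le_sum
      intro v hv
      exact pow_le_pow_left₀ (by linarith [h1 v]) (by linarith [hle v]) 2
    linarith
  exact (csInf_le hbdd ⟨τ, hsub hτ, rfl⟩).trans hcost

/-- The convergence bound is monotonically non-increasing in `k`. -/
theorem convergence_bound_monotone_decrease
    {V : Type*} (P : Finset (List V)) (θ : ℝ) (f' : List V → ℝ)
    (K : ℕ) (That : ℕ → V → ℝ) (w : ℕ → ℝ)
    (hw : ∀ j, 1 ≤ j → j ≤ K → 0 < w j)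
    (hT : ∀ j, 1 ≤ j → j ≤ K → ∀ v, 0 ≤ That j v ∧ That j v ≤ 1)
    (k : ℕ) (hk1 : 1 ≤ k) (hkK : k < K)
    (hne : (feasSet P θ (fun v =>
      (∑ j ∈ Finset.Icc 1 k, w j * That j v) / (∑ j ∈ Finset.Icc 1 K, w j))).Nonempty) :
    optCost P θ f' (fun v =>
        (∑ j ∈ Finset.Icc 1 (k+1), w j * That j v) / (∑ j ∈ Finset.Icc 1 K, w j))
      - optCost P θ f' (fun v =>
        (∑ j ∈ Finset.Icc 1 (k+1), w j * That j v + ∑ j ∈ Finset.Icc (k+2) K, w j)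
          / (∑ j ∈ Finset.Icc 1 K, w j))
    ≤ optCost P θ f' (fun v =>
        (∑ j ∈ Finset.Icc 1 k, w j * That j v) / (∑ j ∈ Finset.Icc 1 K, w j))
      - optCost P θ f' (fun v =>
        (∑ j ∈ Finset.Icc 1 k, w j * That j v + ∑ j ∈ Finset.Icc (k+1) K, w j)
          / (∑ j ∈ Finset.Icc 1 K, w j)) := by
  have hW : 0 < ∑ j ∈ Finset.Icc 1 K, w j := by
    apply Finset.sum_pos (fun j hj => by
        rw [Finset.mem_Icc] at hj; exact hw j hj.1 hj.2)
      (Finset.nonempty_Icc.2 (by omega))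
  have hsucc : ∀ v, (∑ j ∈ Finset.Icc 1 (k+1), w j * That j v)
      = (∑ j ∈ Finset.Icc 1 k, w j * That j v) + w (k+1) * That (k+1) v := by
    intro v
    exact Finset.sum_Icc_succ_top (by omega) _
  have hIccSplit : (∑ j ∈ Finset.Icc (k+1) K, w j)
      = w (k+1) + ∑ j ∈ Finset.Icc (k+2) K, w j := by
    rw [show Finset.Icc (k+1) K = insert (k+1) (Finset.Icc (k+2) K) by
      ext a; simp only [Finset.mem_insert, Finset.mem_Icc]; omega,
      Finset.sum_insert (by simp)]
  have hwk1 := hw (k+1) (by omega) (by omega)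
  have htail_nonneg : 0 ≤ ∑ j ∈ Finset.Icc (k+2) K, w j :=
    Finset.sum_nonneg fun j hj => by
      rw [Finset.mem_Icc] at hj; exact (hw j (by omega) hj.2).le
  have hAle : ∀ m, m ≤ K → ∀ v, (∑ j ∈ Finset.Icc 1 m, w j * That j v)
      ≤ ∑ j ∈ Finset.Icc 1 m, w j := by
    intro m hm v
    apply Finset.sum_le_sum
    intro j hj
    rw [Finset.mem_Icc] at hj
    have := hT j hj.1 (by omega) v
    nlinarith [hw j hj.1 (by omega)]
  have hwsum_le : ∀ m, m ≤ K →
      (∑ j ∈ Finset.Icc 1 m, w j) + (∑ j ∈ Finset.Icc (m+1) K, w j)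
        = ∑ j ∈ Finset.Icc 1 K, w j := by
    intro m hm
    rw [← Finset.sum_union (by
      rw [Finset.disjoint_left]; intro a ha hb
      simp only [Finset.mem_Icc] at ha hb; omega)]
    congr 1
    ext a; simp only [Finset.mem_union, Finset.mem_Icc]; omega
  -- pointwise inequalities between the four maps
  have h12 : ∀ v, (∑ j ∈ Finset.Icc 1 k, w j * That j v) / (∑ j ∈ Finset.Icc 1 K, w j)
      ≤ (∑ j ∈ Finset.Icc 1 (k+1), w j * That j v) / (∑ j ∈ Finset.Icc 1 K, w j) := by
    intro v
    have h0 := hT (k+1) (by omega) (by omega) v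
    gcongr ?_ / _
    rw [hsucc v]
    nlinarith
  have h2U2 : ∀ v, (∑ j ∈ Finset.Icc 1 (k+1), w j * That j v) / (∑ j ∈ Finset.Icc 1 K, w j)
      ≤ (∑ j ∈ Finset.Icc 1 (k+1), w j * That j v + ∑ j ∈ Finset.Icc (k+2) K, w j)
        / (∑ j ∈ Finset.Icc 1 K, w j) := by
    intro v; gcongr ?_ / _; linarith
  have hU2U1 : ∀ v,
      (∑ j ∈ Finset.Icc 1 (k+1), w j * That j v + ∑ j ∈ Finset.Icc (k+2) K, w j)
        / (∑ j ∈ Finset.Icc 1 K, w j)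
      ≤ (∑ j ∈ Finset.Icc 1 k, w j * That j v + ∑ j ∈ Finset.Icc (k+1) K, w j)
        / (∑ j ∈ Finset.Icc 1 K, w j) := by
    intro v
    have h0 := hT (k+1) (by omega) (by omega) v
    gcongr ?_ / _
    rw [hsucc v, hIccSplit]
    nlinarith
  have hU1le1 : ∀ v,
      (∑ j ∈ Finset.Icc 1 k, w j * That j v + ∑ j ∈ Finset.Icc (k+1) K, w j)
        / (∑ j ∈ Finset.Icc 1 K, w j) ≤ 1 := by
    intro v
    rw [div_le_one hW]
    have := hAle k (by omega) v
    have := hwsum_le k (by omega)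
    linarith
  have hL2le1 : ∀ v,
      (∑ j ∈ Finset.Icc 1 (k+1), w j * That j v) / (∑ j ∈ Finset.Icc 1 K, w j) ≤ 1 := by
    intro v
    rw [div_le_one hW]
    have h1 := hAle (k+1) (by omega) v
    have h2 := hwsum_le (k+1) (by omega)
    have h3 : 0 ≤ ∑ j ∈ Finset.Icc (k+2) K, w j := htail_nonneg
    linarith
  -- nonemptiness of feasSet for the upper map T̄_{k+1}
  have hneU2 : (feasSet P θ (fun v =>
      (∑ j ∈ Finset.Icc 1 (k+1), w j * That j v + ∑ j ∈ Finset.Icc (k+2) K, w j)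
        / (∑ j ∈ Finset.Icc 1 K, w j))).Nonempty :=
    hne.mono (feasSet_mono P θ (fun v => (h12 v).trans (h2U2 v)))
  have ineq1 : optCost P θ f' (fun v =>
        (∑ j ∈ Finset.Icc 1 (k+1), w j * That j v) / (∑ j ∈ Finset.Icc 1 K, w j))
      ≤ optCost P θ f' (fun v =>
        (∑ j ∈ Finset.Icc 1 k, w j * That j v) / (∑ j ∈ Finset.Icc 1 K, w j)) :=
    optCost_antitone P θ f' hL2le1 h12 hne
  have ineq2 : optCost P θ f' (fun v =>
        (∑ j ∈ Finset.Icc 1 k, w j * That j v + ∑ j ∈ Finset.Icc (k+1) K, w j)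
          / (∑ j ∈ Finset.Icc 1 K, w j))
      ≤ optCost P θ f' (fun v =>
        (∑ j ∈ Finset.Icc 1 (k+1), w j * That j v + ∑ j ∈ Finset.Icc (k+2) K, w j)
          / (∑ j ∈ Finset.Icc 1 K, w j)) :=
    optCost_antitone P θ f' hU1le1 hU2U1 hneU2
  linarith
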